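/- Let G = (V,E,T) be a finite undirected multigraph with tagged vertex set T ⊆ V. The edges of G can be 2-colored so that every untagged vertex is incident to edges of both colors if and only if (i) every untagged vertex has degree at least 2, and (ii) no connected component of G that contains no tagged vertex is a simple cycle of odd length. -/

import Mathlib

/-- Connectivity (reachability) in a multigraph given by an edge-index type `E`
and an endpoint map `ends : E → V × V`. -/
def MGReach {V E : Type} (ends : E → V × V) : V → V → Prop :=
  Relation.ReflTransGen (fun a b => ∃ e, ends e = (a, b) ∨ ends e = (b, a))

set_option linter.unusedSectionVars false

namespace MGaux

variable {V E : Type}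

section basic

variable (ends : E → V × V)

def inc (e : E) (v : V) : Prop := (ends e).1 = v ∨ (ends e).2 = v

def eb (e : E) (x y : V) : Prop := ends e = (x, y) ∨ ends e = (y, x)

variable {ends}

lemma eb_symm {e x y} (h : eb ends e x y) : eb ends e y x := h.symm

lemma eb_inc₁ {e x y} (h : eb ends e x y) : inc ends e x := by
  rcases h with h | h <;> simp [inc, h]

lemma eb_inc₂ {e x y} (h : eb ends e x y) : inc ends e y := by
  rcases h with h | h <;> simp [inc, h]

lemma inc_exists {e v} (h : inc ends e v) : ∃ w, eb ends e v w := by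
  rcases h with h | h
  · exact ⟨(ends e).2, Or.inl (by rw [← h]) ⟩
  · exact ⟨(ends e).1, Or.inr (by rw [← h]) ⟩

lemma eb_ne (hloop : ∀ e, (ends e).1 ≠ (ends e).2) {e x y} (h : eb ends e x y) : x ≠ y := by
  rcases h with h | h
  · have := hloop e; rw [h] at this; exact this
  · have := hloop e; rw [h] at this; exact fun hxy => this (hxy ▸ rfl)

lemma bodd_add_one (m : ℕ) : Nat.bodd (m + 1) = !(Nat.bodd m) := Nat.bodd_succ m

lemma eb_inc_cases' {e : E} {a b x : V} (heb : eb ends e a b)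
    (hx : inc ends e x) : x = a ∨ x = b := by
  rcases hx with hx | hx <;> rcases heb with heb | heb <;> rw [heb] at hx <;>
    simp only at hx
  · exact Or.inl hx.symm
  · exact Or.inr hx.symm
  · exact Or.inr hx.symm
  · exact Or.inl hx.symm

lemma eb_unique {e x y z} (h1 : eb ends e x y) (h2 : eb ends e x z) : y = z := by
  rcases h1 with h1 | h1 <;> rcases h2 with h2 | h2 <;>
    rw [h1] at h2 <;>
    simp only [Prod.mk.injEq] at h2
  · exact h2.2
  · exact h2.2.trans h2.1
  · exact h2.1.trans h2.2
  · exact h2.1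

lemma reach_refl (v : V) : MGReach ends v v := Relation.ReflTransGen.refl

lemma reach_symm {a b} (h : MGReach ends a b) : MGReach ends b a := by
  refine @Std.Symm.symm _ _ (@Relation.ReflTransGen.symmetric _ _ ⟨?_⟩) _ _ h
  intro x y ⟨e, he⟩
  exact ⟨e, he.symm⟩

lemma reach_trans {a b c} (h1 : MGReach ends a b) (h2 : MGReach ends b c) : MGReach ends a c :=
  h1.trans h2

lemma reach_adj {e a b} (h : eb ends e a b) : MGReach ends a b :=
  Relation.ReflTransGen.single ⟨e, h⟩

def Good (c : E → Bool) (v : V) : Prop :=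
  (∃ e, inc ends e v ∧ c e = true) ∧ (∃ e, inc ends e v ∧ c e = false)

lemma good_of_witness {c : E → Bool} {v e f} (he : inc ends e v) (hf : inc ends f v)
    (h : c e = !(c f)) : Good (ends := ends) c v := by
  cases hcf : c f
  · rw [hcf] at h; exact ⟨⟨e, he, by simpa using h⟩, ⟨f, hf, hcf⟩⟩
  · rw [hcf] at h; exact ⟨⟨f, hf, hcf⟩, ⟨e, he, by simpa using h⟩⟩

lemma good_congr {c c' : E → Bool} {v} (h : ∀ e, inc ends e v → c' e = c e)
    (hg : Good (ends := ends) c v) : Good (ends := ends) c' v := by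
  obtain ⟨⟨e, he, hce⟩, ⟨f, hf, hcf⟩⟩ := hg
  exact ⟨⟨e, he, (h e he).trans hce⟩, ⟨f, hf, (h f hf).trans hcf⟩⟩

lemma good_flip {c c' : E → Bool} {v : V} (h : ∀ e, inc ends e v → c' e = !(c e))
    (hg : Good (ends := ends) c v) : Good (ends := ends) c' v := by
  obtain ⟨⟨a, ha, hca⟩, ⟨b, hb, hcb⟩⟩ := hg
  exact ⟨⟨b, hb, by rw [h b hb, hcb]; rfl⟩, ⟨a, ha, by rw [h a ha, hca]; rfl⟩⟩


end basic

section dfs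

variable (ends : E → V × V) (r : V)

/-- DFS stack wellformedness: consecutive parent links, root at the bottom. -/
def Stk (par : V → V) : List V → Prop
  | [] => True
  | [a] => a = r
  | a :: b :: t => par a = b ∧ a ≠ r ∧ Stk par (b :: t)

/-- `e` is a tree edge. -/
def TreeE [DecidableEq V] (S : Finset V) (pe : V → E) (e : E) : Prop :=
  ∃ w, w ∈ S ∧ w ≠ r ∧ pe w = e

/-- `e` joins two tree-comparable vertices (the deeper endpoint is `y`). -/
def Comp [DecidableEq V] (S : Finset V) (par : V → V) (e : E) : Prop :=
  ∃ x y n, eb ends e x y ∧ 0 < n ∧ par^[n] y = x ∧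
    ∀ k, k < n → par^[k] y ∈ S ∧ par^[k] y ≠ r

variable {ends r}
variable [DecidableEq V]

lemma Stk_tail {par : V → V} {a : V} {l : List V} (h : Stk r par (a :: l)) :
    Stk r par l := by
  cases l with
  | nil => trivial
  | cons b t => exact h.2.2

lemma Stk_congr {par par' : V → V} : ∀ {l : List V}, (∀ x ∈ l, par' x = par x) →
    Stk r par l → Stk r par' l
  | [], _, _ => trivial
  | [a], _, h => h
  | a :: b :: t, hagree, h => by
    refine ⟨(hagree a (by simp)).trans h.1, h.2.1, Stk_congr (fun x hx => hagree x (by simp [hx])) h.2.2⟩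

lemma Stk_iter {par : V → V} : ∀ {a : V} {l : List V}, Stk r par (a :: l) → ∀ x ∈ l,
    ∃ j, 0 < j ∧ par^[j] a = x ∧ ∀ k, k < j → par^[k] a ∈ (a :: l) ∧ par^[k] a ≠ r
  | a, [], _, x, hx => by simp at hx
  | a, b :: t, h, x, hx => by
    obtain ⟨hpar, har, hrest⟩ := h
    rcases List.mem_cons.1 hx with rfl | hx
    · exact ⟨1, one_pos, by simpa using hpar, by
        intro k hk; interval_cases k; exact ⟨by simp, har⟩⟩
    · obtain ⟨j, hj0, hjx, hjk⟩ := Stk_iter hrest x hx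
      refine ⟨j + 1, Nat.succ_pos _, ?_, ?_⟩
      · rw [Function.iterate_add_apply]
        simpa [hpar] using hjx
      · intro k hk
        cases k with
        | zero => exact ⟨by simp, har⟩
        | succ k =>
          have hk' : k < j := by omega
          have : par^[k+1] a = par^[k] b := by
            rw [Function.iterate_add_apply]; simp [hpar]
          rw [this]
          obtain ⟨hm, hr⟩ := hjk k hk'
          exact ⟨by simp [List.mem_cons.1 hm], hr⟩

lemma iter_congr {par par' : V → V} {y : V} {n : ℕ}
    (hagree : ∀ k, k < n → par' (par^[k] y) = par (par^[k] y)) :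
    ∀ m, m ≤ n → par'^[m] y = par^[m] y := by
  intro m hm
  induction m with
  | zero => simp
  | succ m ih =>
    have h1 : par'^[m] y = par^[m] y := ih (by omega)
    rw [Function.iterate_succ_apply', Function.iterate_succ_apply', h1,
      hagree m (by omega)]

lemma TreeE_mono {S S' : Finset V} {pe pe' : V → E} {e : E}
    (hS : S ⊆ S') (hagree : ∀ x ∈ S, pe' x = pe x) :
    TreeE r S pe e → TreeE r S' pe' e := by
  rintro ⟨w, hw, hwr, hpe⟩
  exact ⟨w, hS hw, hwr, (hagree w hw).trans hpe⟩

lemma Comp_mono {S S' : Finset V} {par par' : V → V} {e : E}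
    (hS : S ⊆ S') (hagree : ∀ x ∈ S, par' x = par x) :
    Comp ends r S par e → Comp ends r S' par' e := by
  rintro ⟨x, y, n, hebe, hn, hit, hcond⟩
  have hag : ∀ k, k < n → par' (par^[k] y) = par (par^[k] y) := by
    intro k hk; exact hagree _ (hcond k hk).1
  refine ⟨x, y, n, hebe, hn, ?_, ?_⟩
  · rw [iter_congr hag n le_rfl]; exact hit
  · intro k hk
    rw [iter_congr hag k (le_of_lt hk)]
    exact ⟨hS (hcond k hk).1, (hcond k hk).2⟩

/-- Endpoints of a tree or comparable edge lie in `S` (needs tree facts). -/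
lemma Comp_mem {S : Finset V} {par : V → V} {e : E}
    (h4 : ∀ v ∈ S, v ≠ r → par v ∈ S)
    (h : Comp ends r S par e) :
    ∀ v, inc ends e v → v ∈ S := by
  rintro v hv
  obtain ⟨x, y, n, hebe, hn, hit, hcond⟩ := h
  have hyS : y ∈ S := by simpa using (hcond 0 hn).1
  have hxS : x ∈ S := by
    have h1 : par^[n-1] y ∈ S := (hcond (n-1) (by omega)).1
    have h2 : par^[n-1] y ≠ r := (hcond (n-1) (by omega)).2
    have : par (par^[n-1] y) = x := by
      have h3 : par^[n-1+1] y = par (par^[n-1] y) := Function.iterate_succ_apply' par _ y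
      have h4' : n - 1 + 1 = n := by omega
      rw [h4', hit] at h3
      exact h3.symm
    exact this ▸ h4 _ h1 h2
  obtain ⟨w, hw⟩ := inc_exists hv
  rcases hebe with hebe | hebe <;> rcases hw with hw | hw <;>
    rw [hebe] at hw <;> simp only [Prod.mk.injEq] at hw
  · rw [← hw.1]; exact hxS
  · rw [← hw.2]; exact hyS
  · rw [← hw.1]; exact hyS
  · rw [← hw.2]; exact hxS


lemma eb_mem_cases {ends : E → V × V} {e : E} {b c x y : V}
    (h1 : eb ends e b c) (h2 : eb ends e x y) :
    (b = x ∧ c = y) ∨ (b = y ∧ c = x) := by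
  rcases h1 with h1 | h1 <;> rcases h2 with h2 | h2 <;> rw [h1] at h2 <;>
    injection h2 with ha hb <;> subst ha <;> subst hb <;> simp

lemma dfs_finish {ends : E → V × V} {r : V} [Fintype V] {S : Finset V}
    {par : V → V} {pe : V → E} (dep : V → ℕ)
    (hr : r ∈ S) (h1 : ∀ v ∈ S, MGReach ends r v)
    (h4 : ∀ v ∈ S, v ≠ r → par v ∈ S ∧ eb ends (pe v) v (par v) ∧ dep v = dep (par v) + 1)
    (h5 : ∀ v ∈ S, ∀ e, inc ends e v → TreeE r S pe e ∨ Comp ends r S par e) :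
    ∀ v, MGReach ends r v ↔ v ∈ S := by
  intro v
  constructor
  · intro h
    induction h with
    | refl => exact hr
    | tail hab hbc ih =>
      rename_i b c
      obtain ⟨e, he⟩ := hbc
      have hebc : eb ends e b c := he
      have hincb : inc ends e b := eb_inc₁ hebc
      rcases h5 b ih e hincb with hT | hC
      · obtain ⟨w, hwS, hwr, hpe⟩ := hT
        have hew : eb ends e w (par w) := hpe ▸ (h4 w hwS hwr).2.1
        rcases eb_mem_cases hebc hew with ⟨_, hc⟩ | ⟨_, hc⟩
        · exact hc ▸ (h4 w hwS hwr).1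
        · exact hc ▸ hwS
      · exact Comp_mem (fun v hv hvr => (h4 v hv hvr).1) hC c (eb_inc₂ hebc)
  · exact h1 v

lemma dfs_aux {ends : E → V × V} (hloop : ∀ e, (ends e).1 ≠ (ends e).2) (r : V) [Fintype V] :
    ∀ (N : ℕ) (S : Finset V) (stk : List V) (par : V → V) (pe : V → E) (dep : V → ℕ),
    2 * (Fintype.card V - S.card) + stk.length ≤ N →
    r ∈ S →
    (∀ v ∈ S, MGReach ends r v) →
    dep r = 0 →
    (∀ v ∈ S, v ≠ r → par v ∈ S ∧ eb ends (pe v) v (par v) ∧ dep v = dep (par v) + 1) →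
    (∀ v ∈ S, v ∉ stk → ∀ e, inc ends e v → TreeE r S pe e ∨ Comp ends r S par e) →
    Stk r par stk →
    (∀ x ∈ stk, x ∈ S) →
    ∃ (par' : V → V) (pe' : V → E) (dep' : V → ℕ) (S' : Finset V),
      (∀ v, MGReach ends r v ↔ v ∈ S') ∧ dep' r = 0 ∧
      (∀ v ∈ S', v ≠ r → par' v ∈ S' ∧ eb ends (pe' v) v (par' v) ∧
        dep' v = dep' (par' v) + 1) ∧
      (∀ v ∈ S', ∀ e, inc ends e v → TreeE r S' pe' e ∨ Comp ends r S' par' e) := by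
  intro N
  induction N with
  | zero =>
    intro S stk par pe dep hmeas hr h1 h3 h4 h5 hstk hsub
    have hlen : stk.length = 0 := by omega
    have hnil : stk = [] := List.length_eq_zero_iff.mp hlen
    subst hnil
    refine ⟨par, pe, dep, S, ?_, h3, h4, ?_⟩
    · exact dfs_finish dep hr h1 h4 (fun v hv e he => h5 v hv (by simp) e he)
    · exact fun v hv e he => h5 v hv (by simp) e he
  | succ N ih =>
    intro S stk par pe dep hmeas hr h1 h3 h4 h5 hstk hsub
    cases stk with
    | nil =>
      refine ⟨par, pe, dep, S, ?_, h3, h4, ?_⟩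
      · exact dfs_finish dep hr h1 h4 (fun v hv e he => h5 v hv (by simp) e he)
      · exact fun v hv e he => h5 v hv (by simp) e he
    | cons u rest =>
      have huS : u ∈ S := hsub u (by simp)
      by_cases hpush : ∃ p : E × V, eb ends p.1 u p.2 ∧ p.2 ∉ S
      · -- PUSH
        obtain ⟨⟨e, w⟩, hew0, hwS0⟩ := hpush
        have hew : eb ends e u w := hew0
        have hwS : w ∉ S := hwS0
        have hwr : w ≠ r := fun h => hwS (h ▸ hr)
        have hwu : u ≠ w := eb_ne hloop hew
        have hcard : S.card + 1 ≤ Fintype.card V := by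
          rw [← Finset.card_insert_of_notMem hwS]
          exact Finset.card_le_univ _
        have hagree_par : ∀ x ∈ S, Function.update par w u x = par x := by
          intro x hx
          have hxw : x ≠ w := by rintro rfl; exact hwS hx
          exact Function.update_of_ne hxw _ _
        have hagree_pe : ∀ x ∈ S, Function.update pe w e x = pe x := by
          intro x hx
          have hxw : x ≠ w := by rintro rfl; exact hwS hx
          exact Function.update_of_ne hxw _ _
        have hagree_dep : ∀ x ∈ S, Function.update dep w (dep u + 1) x = dep x := by
          intro x hx
          have hxw : x ≠ w := by rintro rfl; exact hwS hx
          exact Function.update_of_ne hxw _ _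
        have hmeas' : 2 * (Fintype.card V - (insert w S).card) +
            (w :: u :: rest).length ≤ N := by
          rw [Finset.card_insert_of_notMem hwS]
          simp only [List.length_cons] at hmeas ⊢
          omega
        apply ih (insert w S) (w :: u :: rest) (Function.update par w u)
          (Function.update pe w e) (Function.update dep w (dep u + 1))
        · exact hmeas'
        · exact Finset.mem_insert_of_mem hr
        · intro v hv
          rcases Finset.mem_insert.1 hv with rfl | hv
          · exact (h1 u huS).tail ⟨e, hew⟩
          · exact h1 v hv
        · rw [hagree_dep r hr]; exact h3
        · intro v hv hvr
          rcases Finset.mem_insert.1 hv with rfl | hv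
          · refine ⟨?_, ?_, ?_⟩
            · rw [Function.update_self]; exact Finset.mem_insert_of_mem huS
            · rw [Function.update_self, Function.update_self]
              exact eb_symm hew
            · rw [Function.update_self, Function.update_self, hagree_dep u huS]
          · obtain ⟨hp1, hp2, hp3⟩ := h4 v hv hvr
            rw [hagree_par v hv, hagree_pe v hv, hagree_dep v hv, hagree_dep _ hp1]
            exact ⟨Finset.mem_insert_of_mem hp1, hp2, hp3⟩
        · intro v hv hvstk e' he'
          have hvw : v ≠ w := fun h => hvstk (by simp [h])
          have hvS : v ∈ S := (Finset.mem_insert.1 hv).resolve_left hvw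
          have hvold : v ∉ u :: rest := fun h => hvstk (by simp [h])
          rcases h5 v hvS hvold e' he' with hT | hC
          · exact Or.inl (TreeE_mono (Finset.subset_insert _ _) hagree_pe hT)
          · exact Or.inr (Comp_mono (Finset.subset_insert _ _) hagree_par hC)
        · refine ⟨Function.update_self _ _ _, hwr, ?_⟩
          exact Stk_congr (fun x hx => hagree_par x (hsub x hx)) hstk
        · intro x hx
          rcases List.mem_cons.1 hx with rfl | hx
          · exact Finset.mem_insert_self _ _
          · exact Finset.mem_insert_of_mem (hsub x hx)
      · -- POP
        push_neg at hpush
        apply ih S rest par pe dep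
        · simp only [List.length_cons] at hmeas; omega
        · exact hr
        · exact h1
        · exact h3
        · exact h4
        · intro v hv hvrest e' he'
          by_cases hvu : v = u
          · subst hvu
            obtain ⟨w, hw⟩ := inc_exists he'
            have hwS : w ∈ S := by
              by_contra hwS
              exact hwS (hpush (e', w) hw)
            by_cases hwrest : w ∈ rest
            · obtain ⟨j, hj0, hjit, hjcond⟩ := Stk_iter hstk w hwrest
              exact Or.inr ⟨w, v, j, eb_symm hw, hj0, hjit,
                fun k hk => ⟨hsub _ (hjcond k hk).1, (hjcond k hk).2⟩⟩
            · have hwstk : w ∉ v :: rest := by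
                intro h
                rcases List.mem_cons.1 h with rfl | h
                · exact (eb_ne hloop hw) rfl
                · exact hwrest h
              rcases h5 w hwS hwstk e' (eb_inc₂ hw) with hT | hC
              · exact Or.inl hT
              · exact Or.inr hC
          · exact h5 v hv (fun h => (List.mem_cons.1 h).elim hvu hvrest) e' he'
        · exact Stk_tail hstk
        · exact fun x hx => hsub x (by simp [hx])

end dfs


section ncard

variable {α : Type}

lemma exists_ne_of_two {s : Set α} (h : 2 ≤ s.ncard) (a : α) : ∃ b ∈ s, b ≠ a := by
  by_contra hc
  push_neg at hc
  have hsub : s ⊆ {a} := fun x hx => hc x hx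
  have := Set.ncard_le_ncard hsub (Set.finite_singleton a)
  rw [Set.ncard_singleton] at this
  omega

lemma exists_two_ne {s : Set α} (h : 2 ≤ s.ncard) : ∃ a ∈ s, ∃ b ∈ s, a ≠ b := by
  have hne : s.Nonempty := Set.nonempty_of_ncard_ne_zero (by omega)
  obtain ⟨a, ha⟩ := hne
  obtain ⟨b, hb, hba⟩ := exists_ne_of_two h a
  exact ⟨b, hb, a, ha, hba⟩

lemma exists_ne_ne_of_three {s : Set α} (h : 3 ≤ s.ncard) (a b : α) :
    ∃ x ∈ s, x ≠ a ∧ x ≠ b := by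
  by_contra hc
  push_neg at hc
  have hsub : s ⊆ {a, b} := by
    intro x hx
    rcases Classical.em (x = a) with rfl | hxa
    · exact Set.mem_insert _ _
    · simp [hc x hx hxa]
  have h1 := Set.ncard_le_ncard hsub (Set.toFinite _)
  have h2 := Set.ncard_insert_le a ({b} : Set α)
  rw [Set.ncard_singleton] at h2
  omega

end ncard

section dfsdata

variable [DecidableEq V] [Fintype V]

structure DFSData (ends : E → V × V) (r : V) [DecidableEq V] where
  par : V → V
  pe : V → E
  dep : V → ℕ
  S : Finset V
  hS : ∀ v, MGReach ends r v ↔ v ∈ S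
  h0 : dep r = 0
  hD1 : ∀ v ∈ S, v ≠ r → par v ∈ S ∧ eb ends (pe v) v (par v) ∧ dep v = dep (par v) + 1
  hD2 : ∀ v ∈ S, ∀ e, inc ends e v → TreeE r S pe e ∨ Comp ends r S par e

lemma exists_dfs (ends : E → V × V) (hloop : ∀ e, (ends e).1 ≠ (ends e).2) (r : V)
    [Nonempty E] : Nonempty (DFSData ends r) := by
  have e₀ : E := Classical.arbitrary E
  obtain ⟨par, pe, dep, S, hS, h0, hD1, hD2⟩ :=
    dfs_aux hloop r (2 * Fintype.card V + 1) {r} [r] id (fun _ => e₀) (fun _ => 0)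
      (by
        have h1 : ({r} : Finset V).card = 1 := Finset.card_singleton r
        have h2 : Fintype.card V - 1 ≤ Fintype.card V := Nat.sub_le _ _
        simp only [h1, List.length_cons, List.length_nil]
        omega)
      (Finset.mem_singleton_self r)
      (by intro v hv; rw [Finset.mem_singleton] at hv; rw [hv]; exact reach_refl r)
      rfl
      (by intro v hv hvr; rw [Finset.mem_singleton] at hv; exact absurd hv hvr)
      (by intro v hv hvstk; rw [Finset.mem_singleton] at hv; exact absurd (by simp [hv]) hvstk)
      rfl
      (by intro x hx; simp at hx; simp [hx])
  exact ⟨⟨par, pe, dep, S, hS, h0, hD1, hD2⟩⟩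

variable {ends : E → V × V} {r : V}

namespace DFSData

lemma par_mem (D : DFSData ends r) {v : V} (hv : v ∈ D.S) (hvr : v ≠ r) : D.par v ∈ D.S :=
  (D.hD1 v hv hvr).1

lemma pe_eb (D : DFSData ends r) {v : V} (hv : v ∈ D.S) (hvr : v ≠ r) :
    eb ends (D.pe v) v (D.par v) := (D.hD1 v hv hvr).2.1

lemma dep_succ (D : DFSData ends r) {v : V} (hv : v ∈ D.S) (hvr : v ≠ r) :
    D.dep v = D.dep (D.par v) + 1 := (D.hD1 v hv hvr).2.2

lemma eq_root_of_dep_zero (D : DFSData ends r) {v : V} (hv : v ∈ D.S) (h : D.dep v = 0) :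
    v = r := by
  by_contra hvr
  have := D.dep_succ hv hvr
  omega

/-- Depth along an ancestor chain. -/
lemma chain_dep (D : DFSData ends r) {y : V} (hy : y ∈ D.S) :
    ∀ n, (∀ k, k < n → D.par^[k] y ∈ D.S ∧ D.par^[k] y ≠ r) →
      D.dep y = D.dep (D.par^[n] y) + n ∧ D.par^[n] y ∈ D.S := by
  intro n
  induction n with
  | zero => intro _; simpa using hy
  | succ n ih =>
    intro hcond
    obtain ⟨ihd, ihm⟩ := ih (fun k hk => hcond k (by omega))
    have hn := hcond n (by omega)
    have hstep : D.par^[n+1] y = D.par (D.par^[n] y) := Function.iterate_succ_apply' _ _ _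
    have hd := D.dep_succ hn.1 hn.2
    constructor
    · rw [hstep]
      omega
    · rw [hstep]
      exact D.par_mem hn.1 hn.2

lemma pe_endpoint (D : DFSData ends r) {v x : V} (hv : v ∈ D.S) (hvr : v ≠ r)
    (hx : inc ends (D.pe v) x) : x = v ∨ x = D.par v := by
  obtain ⟨y, hy⟩ := inc_exists hx
  rcases eb_mem_cases hy (D.pe_eb hv hvr) with ⟨h1, _⟩ | ⟨h1, _⟩
  · exact Or.inl h1
  · exact Or.inr h1

lemma pe_inj (D : DFSData ends r) {v w : V} (hv : v ∈ D.S) (hvr : v ≠ r)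
    (hw : w ∈ D.S) (hwr : w ≠ r) (h : D.pe v = D.pe w) : v = w := by
  rcases D.pe_endpoint hw hwr (h ▸ eb_inc₁ (D.pe_eb hv hvr)) with h1 | h1
  · exact h1
  · rcases D.pe_endpoint hv hvr (h.symm ▸ eb_inc₁ (D.pe_eb hw hwr)) with h2 | h2
    · exact h2.symm
    · exfalso
      have d1 := D.dep_succ hv hvr
      have d2 := D.dep_succ hw hwr
      rw [← h2] at d1
      rw [← h1] at d2
      omega

/-- At the root, a comparable edge has `r` as the shallow end. -/
lemma comp_root (D : DFSData ends r) {e : E} (hC : Comp ends r D.S D.par e)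
    (hre : inc ends e r) :
    ∃ y n, eb ends e r y ∧ 0 < n ∧ D.par^[n] y = r ∧
      (∀ k, k < n → D.par^[k] y ∈ D.S ∧ D.par^[k] y ≠ r) := by
  obtain ⟨x, y, n, hebe, hn, hit, hcond⟩ := hC
  obtain ⟨z, hz⟩ := inc_exists hre
  rcases eb_mem_cases hz hebe with ⟨h1, _⟩ | ⟨h1, _⟩
  · exact ⟨y, n, h1 ▸ hebe, hn, hit ▸ (h1 ▸ rfl), hcond⟩
  · exfalso
    have := (hcond 0 hn).2
    simp only [Function.iterate_zero, id_eq] at this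
    exact this h1.symm

/-- The base coloring: tree edges get the parity of the parent's depth, other
edges the parity of the deeper endpoint. -/
noncomputable def col (D : DFSData ends r) (e : E) : Bool :=
  letI := Classical.propDecidable (TreeE r D.S D.pe e)
  if TreeE r D.S D.pe e then Nat.bodd (min (D.dep (ends e).1) (D.dep (ends e).2))
  else Nat.bodd (max (D.dep (ends e).1) (D.dep (ends e).2))

lemma col_pe (D : DFSData ends r) {v : V} (hv : v ∈ D.S) (hvr : v ≠ r) :
    D.col (D.pe v) = !(Nat.bodd (D.dep v)) := by
  have hT : TreeE r D.S D.pe (D.pe v) := ⟨v, hv, hvr, rfl⟩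
  have hd := D.dep_succ hv hvr
  have hmm : min (D.dep v) (D.dep (D.par v)) = D.dep (D.par v) := by omega
  have hmm' : min (D.dep (D.par v)) (D.dep v) = D.dep (D.par v) := by omega
  rcases D.pe_eb hv hvr with h | h
  · simp only [col, if_pos hT, h]
    rw [hmm, hd]
    simp
  · simp only [col, if_pos hT, h]
    rw [hmm', hd]
    simp

lemma col_comp (D : DFSData ends r) {e : E} {x y : V} {n : ℕ}
    (hnT : ¬ TreeE r D.S D.pe e) (hebe : eb ends e x y) (hn : 0 < n)
    (hit : D.par^[n] y = x)
    (hcond : ∀ k, k < n → D.par^[k] y ∈ D.S ∧ D.par^[k] y ≠ r) :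
    D.col e = Nat.bodd (D.dep y) := by
  have hy : y ∈ D.S := by simpa using (hcond 0 hn).1
  have hchain := (D.chain_dep hy n hcond).1
  rw [hit] at hchain
  have hm1 : max (D.dep x) (D.dep y) = D.dep y := by omega
  have hm2 : max (D.dep y) (D.dep x) = D.dep y := by omega
  rcases hebe with h | h
  · simp only [col, if_neg hnT, h]
    rw [hm1]
  · simp only [col, if_neg hnT, h]
    rw [hm2]

lemma root_mem (D : DFSData ends r) : r ∈ D.S := (D.hS r).1 (reach_refl r)

lemma root_child (D : DFSData ends r) {e : E} (he : inc ends e r) :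
    ∃ w, w ∈ D.S ∧ w ≠ r ∧ D.par w = r := by
  rcases D.hD2 r D.root_mem e he with hT | hC
  · obtain ⟨w, hwS, hwr, hpe⟩ := hT
    rcases D.pe_endpoint hwS hwr (hpe ▸ he) with h1 | h1
    · exact absurd h1.symm hwr
    · exact ⟨w, hwS, hwr, h1.symm⟩
  · obtain ⟨y, n, _, hn, hit, hcond⟩ := D.comp_root hC he
    refine ⟨D.par^[n-1] y, (hcond (n-1) (by omega)).1, (hcond (n-1) (by omega)).2, ?_⟩
    rw [← Function.iterate_succ_apply' D.par (n-1) y]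
    have h2 : (n - 1).succ = n := by omega
    rw [h2, hit]

lemma col_root_child (D : DFSData ends r) {w : V} (hwS : w ∈ D.S) (hwr : w ≠ r)
    (hpw : D.par w = r) : D.col (D.pe w) = false := by
  rw [D.col_pe hwS hwr, D.dep_succ hwS hwr, hpw, D.h0]
  rfl

lemma dep_child (D : DFSData ends r) {v w : V} (hwS : w ∈ D.S) (hwr : w ≠ r)
    (hpw : D.par w = v) : D.dep w = D.dep v + 1 := by
  rw [D.dep_succ hwS hwr, hpw]

/-- Base coloring is good at every non-root untagged vertex. -/
lemma base_good (D : DFSData ends r) {T : Finset V}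
    (hdeg : ∀ u, u ∉ T → 2 ≤ Set.ncard {e | inc ends e u}) {v : V}
    (hv : v ∈ D.S) (hvr : v ≠ r) (hvT : v ∉ T) : Good (ends := ends) D.col v := by
  have hpei : inc ends (D.pe v) v := eb_inc₁ (D.pe_eb hv hvr)
  by_cases hch : ∃ w, w ∈ D.S ∧ w ≠ r ∧ D.par w = v
  · obtain ⟨w, hwS, hwr, hpw⟩ := hch
    refine good_of_witness (hpw ▸ eb_inc₂ (D.pe_eb hwS hwr)) hpei ?_
    rw [D.col_pe hwS hwr, D.col_pe hv hvr, D.dep_child hwS hwr hpw]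
    simp
  · obtain ⟨f, hf, hfne⟩ := exists_ne_of_two (hdeg v hvT) (D.pe v)
    have hfv : inc ends f v := hf
    have hnT : ¬ TreeE r D.S D.pe f := by
      rintro ⟨w, hwS, hwr, rfl⟩
      rcases D.pe_endpoint hwS hwr hfv with h1 | h1
      · exact hfne (by rw [h1])
      · exact hch ⟨w, hwS, hwr, h1.symm⟩
    rcases D.hD2 v hv f hfv with hT | hC
    · exact absurd hT hnT
    obtain ⟨x, y, n, hebe, hn, hit, hcond⟩ := hC
    obtain ⟨z, hz⟩ := inc_exists hfv
    have hvxy : v = x ∨ v = y := by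
      rcases eb_mem_cases hz hebe with ⟨h1, _⟩ | ⟨h1, _⟩
      · exact Or.inl h1
      · exact Or.inr h1
    rcases hvxy with rfl | rfl
    · exfalso
      refine hch ⟨D.par^[n-1] y, (hcond (n-1) (by omega)).1, (hcond (n-1) (by omega)).2, ?_⟩
      rw [← Function.iterate_succ_apply' D.par (n-1) y]
      have h' : (n - 1).succ = n := by omega
      rw [h', hit]
    · refine good_of_witness hfv hpei ?_
      rw [D.col_comp hnT hebe hn hit hcond, D.col_pe hv hvr]
      simp

end DFSData

end dfsdata

section compgood

variable [DecidableEq V] [Fintype V] [Fintype E]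

lemma comp_good (ends : E → V × V) (hloop : ∀ e, (ends e).1 ≠ (ends e).2) (T : Finset V)
    (hdeg : ∀ u, u ∉ T → 2 ≤ Set.ncard {e | inc ends e u})
    (hodd : ∀ v : V,
      ((∀ w, MGReach ends v w → w ∉ T) ∧
       (∀ w, MGReach ends v w → Set.ncard {e | inc ends e w} = 2)) →
      ¬ Odd (Set.ncard {w | MGReach ends v w}))
    (r₀ : V) :
    ∃ c : E → Bool, ∀ v, MGReach ends r₀ v → v ∉ T → Good (ends := ends) c v := by
  classical
  by_cases htriv : ∀ v, MGReach ends r₀ v → v ∈ T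
  · exact ⟨fun _ => true, fun v hv hvT => absurd (htriv v hv) hvT⟩
  push_neg at htriv
  obtain ⟨u₀, hu₀r, hu₀T⟩ := htriv
  have hEne : Nonempty E := by
    have h2 := hdeg u₀ hu₀T
    obtain ⟨e, -⟩ := Set.nonempty_of_ncard_ne_zero
      (by omega : Set.ncard {e | inc ends e u₀} ≠ 0)
    exact ⟨e⟩
  by_cases htag : ∃ t, MGReach ends r₀ t ∧ t ∈ T
  · obtain ⟨t, htr, htT⟩ := htag
    obtain ⟨D⟩ := exists_dfs ends hloop t
    refine ⟨D.col, ?_⟩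
    intro v hv hvT
    have hvt : MGReach ends t v := reach_trans (reach_symm htr) hv
    have hvS : v ∈ D.S := (D.hS v).1 hvt
    have hvr : v ≠ t := fun h => hvT (h ▸ htT)
    exact D.base_good hdeg hvS hvr hvT
  · push_neg at htag
    have hroot : ∃ r, MGReach ends r₀ r ∧ (3 ≤ Set.ncard {e | inc ends e r} ∨
        ∀ w, MGReach ends r₀ w → Set.ncard {e | inc ends e w} ≤ 2) := by
      by_cases h3 : ∃ w, MGReach ends r₀ w ∧ 3 ≤ Set.ncard {e | inc ends e w}
      · obtain ⟨w, hw1, hw2⟩ := h3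
        exact ⟨w, hw1, Or.inl hw2⟩
      · push_neg at h3
        exact ⟨r₀, reach_refl r₀, Or.inr (fun w hw => by have := h3 w hw; omega)⟩
    obtain ⟨r, hrr, hrcase⟩ := hroot
    obtain ⟨D⟩ := exists_dfs ends hloop r
    have hreq : ∀ v, MGReach ends r₀ v ↔ MGReach ends r v :=
      fun v => ⟨fun h => reach_trans (reach_symm hrr) h, fun h => reach_trans hrr h⟩
    have hKT : ∀ v, v ∈ D.S → v ∉ T :=
      fun v hv => htag v ((hreq v).2 ((D.hS v).2 hv))
    have hrS : r ∈ D.S := D.root_mem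
    have hrT : r ∉ T := hKT r hrS
    suffices h : ∃ c : E → Bool, ∀ v ∈ D.S, Good (ends := ends) c v by
      obtain ⟨c, hc⟩ := h
      exact ⟨c, fun v hv _ => hc v ((D.hS v).1 ((hreq v).1 hv))⟩
    by_cases hbad : ∀ e, inc ends e r → D.col e = false
    · by_cases hnt : ∃ e, inc ends e r ∧ ¬ TreeE r D.S D.pe e
      · obtain ⟨e1, hinc1, hnT1⟩ := hnt
        rcases D.hD2 r hrS e1 hinc1 with hT | hC
        · exact absurd hT hnT1
        obtain ⟨v1, n, heb1, hn, hit, hcond⟩ := D.comp_root hC hinc1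
        have hv1S : v1 ∈ D.S := by simpa using (hcond 0 hn).1
        have hv1r : v1 ≠ r := by simpa using (hcond 0 hn).2
        have hdv1 : D.dep v1 = n := by
          have h1 := (D.chain_dep hv1S n hcond).1
          rw [hit, D.h0] at h1
          omega
        have hnev : Nat.bodd n = false := by
          have hb := hbad e1 (eb_inc₁ heb1)
          rw [D.col_comp hnT1 heb1 hn hit hcond, hdv1] at hb
          exact hb
        have hn2 : 2 ≤ n := by
          by_contra hlt
          have hn1 : n = 1 := by omega
          rw [hn1] at hnev
          simp at hnev
        -- facts about the path p k = D.par^[k] v1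
        have hpmem : ∀ m, m ≤ n → D.par^[m] v1 ∈ D.S := by
          intro m hm
          exact (D.chain_dep hv1S m (fun k hk => hcond k (lt_of_lt_of_le hk hm))).2
        have hdp : ∀ m, m ≤ n → D.dep (D.par^[m] v1) = n - m := by
          intro m hm
          have h1 := (D.chain_dep hv1S m (fun k hk => hcond k (lt_of_lt_of_le hk hm))).1
          omega
        have hppar : ∀ k, D.par (D.par^[k] v1) = D.par^[k+1] v1 :=
          fun k => (Function.iterate_succ_apply' D.par k v1).symm
        have hpr_of : ∀ m, m ≤ n → D.par^[m] v1 = r → m = n := by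
          intro m hm hmr
          have := hdp m hm
          rw [hmr, D.h0] at this
          omega
        have hebp : ∀ k, k < n →
            eb ends (D.pe (D.par^[k] v1)) (D.par^[k] v1) (D.par^[k+1] v1) := by
          intro k hk
          have := D.pe_eb (hcond k hk).1 (hcond k hk).2
          rwa [hppar k] at this
        have hcolp : ∀ k, k < n → D.col (D.pe (D.par^[k] v1)) = !(Nat.bodd (n - k)) := by
          intro k hk
          rw [D.col_pe (hcond k hk).1 (hcond k hk).2, hdp k (le_of_lt hk)]
        rcases hrcase with h3 | hle2
        · -- B1 : flip the path to v1 together with e1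
          set F : Set E := {e | e = e1 ∨ ∃ k, k < n ∧ e = D.pe (D.par^[k] v1)} with hF
          set c : E → Bool := fun e => if e ∈ F then !(D.col e) else D.col e with hc
          have hcF : ∀ e, e ∈ F → c e = !(D.col e) := by
            intro e he
            rw [hc]
            exact if_pos he
          have hcnF : ∀ e, e ∉ F → c e = D.col e := by
            intro e he
            rw [hc]
            exact if_neg he
          have he1F : e1 ∈ F := by rw [hF]; exact Or.inl rfl
          have hpkF : ∀ k, k < n → D.pe (D.par^[k] v1) ∈ F := by
            intro k hk
            rw [hF]
            exact Or.inr ⟨k, hk, rfl⟩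
          have hce1 : c e1 = true := by
            rw [hcF e1 he1F, hbad e1 (eb_inc₁ heb1)]
            rfl
          have hcpk : ∀ k, k < n → c (D.pe (D.par^[k] v1)) = Nat.bodd (n - k) := by
            intro k hk
            rw [hcF _ (hpkF k hk), hcolp k hk, Bool.not_not]
          have hFtouch : ∀ e ∈ F, ∀ x, inc ends e x → ∃ k, k ≤ n ∧ x = D.par^[k] v1 := by
            intro e he
            rw [hF] at he
            rcases he with rfl | ⟨k, hk, rfl⟩
            · intro x hx
              rcases eb_inc_cases' heb1 hx with rfl | rfl
              · exact ⟨n, le_rfl, hit.symm⟩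
              · exact ⟨0, by omega, rfl⟩
            · intro x hx
              rcases eb_inc_cases' (hebp k hk) hx with rfl | rfl
              · exact ⟨k, le_of_lt hk, rfl⟩
              · exact ⟨k + 1, by omega, rfl⟩
          refine ⟨c, ?_⟩
          intro v hvS
          by_cases hvP : ∃ k, k ≤ n ∧ v = D.par^[k] v1
          · obtain ⟨k, hk, rfl⟩ := hvP
            by_cases hkn : k = n
            · rw [hkn, hit]
              obtain ⟨e', he'mem, he'1, he'2⟩ :=
                exists_ne_ne_of_three h3 (D.pe (D.par^[n-1] v1)) e1
              have he'r : inc ends e' r := he'mem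
              have he'F : e' ∉ F := by
                rw [hF]
                rintro (rfl | ⟨k', hk', he'⟩)
                · exact he'2 rfl
                · subst he'
                  rcases D.pe_endpoint (hcond k' hk').1 (hcond k' hk').2 he'r with h1 | h1
                  · exact (hcond k' hk').2 h1.symm
                  · rw [hppar k'] at h1
                    have hk'' := hpr_of (k' + 1) (by omega) h1.symm
                    exact he'1 (by rw [show k' = n - 1 by omega])
              have hce' : c e' = false := by
                rw [hcnF e' he'F]
                exact hbad e' he'r
              have hpn1 : c (D.pe (D.par^[n-1] v1)) = true := by
                rw [hcpk (n-1) (by omega), show n - (n-1) = 1 by omega]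
                rfl
              refine good_of_witness (e := D.pe (D.par^[n-1] v1)) (f := e') ?_ he'r ?_
              · have h5 := eb_inc₂ (hebp (n-1) (by omega))
                rw [show (n-1) + 1 = n by omega, hit] at h5
                exact h5
              · rw [hpn1, hce']
                rfl
            · by_cases hk0 : k = 0
              · subst hk0
                simp only [Function.iterate_zero, id_eq]
                have h1 : c (D.pe v1) = false := by
                  have h2 := hcpk 0 (by omega)
                  simp only [Function.iterate_zero, id_eq, Nat.sub_zero] at h2
                  rw [h2]
                  exact hnev
                refine good_of_witness (eb_inc₂ heb1) (eb_inc₁ (D.pe_eb hv1S hv1r)) ?_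
                rw [hce1, h1]
                rfl
              · have hklt : k < n := lt_of_le_of_ne hk hkn
                have hw1 : c (D.pe (D.par^[k] v1)) = Nat.bodd (n - k) := hcpk k hklt
                have hw2 : c (D.pe (D.par^[k-1] v1)) = Nat.bodd (n - (k-1)) :=
                  hcpk (k-1) (by omega)
                refine good_of_witness (e := D.pe (D.par^[k-1] v1))
                  (f := D.pe (D.par^[k] v1)) ?_
                  (eb_inc₁ (D.pe_eb (hcond k hklt).1 (hcond k hklt).2)) ?_
                · have h5 := eb_inc₂ (hebp (k-1) (by omega))
                  rw [show (k-1) + 1 = k by omega] at h5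
                  exact h5
                · rw [hw1, hw2, show n - (k-1) = (n - k) + 1 by omega, bodd_add_one]
          · push_neg at hvP
            have hvr : v ≠ r := by
              intro h
              exact hvP n le_rfl (by rw [h, hit])
            refine good_congr ?_ (D.base_good hdeg hvS hvr (hKT v hvS))
            intro e he
            refine hcnF e ?_
            intro hmem
            obtain ⟨k, hk, hkv⟩ := hFtouch e hmem v he
            exact hvP k hk hkv
        · -- B3 : the component is an odd cycle, contradiction
          exfalso
          have hd2 : ∀ w, w ∈ D.S → Set.ncard {e | inc ends e w} = 2 := by
            intro w hw
            have hle := hle2 w ((hreq w).2 ((D.hS w).2 hw))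
            have hge := hdeg w (hKT w hw)
            omega
          have htreep : ∀ k, k < n → TreeE r D.S D.pe (D.pe (D.par^[k] v1)) :=
            fun k hk => ⟨D.par^[k] v1, (hcond k hk).1, (hcond k hk).2, rfl⟩
          have hne1p : ∀ k, k < n → e1 ≠ D.pe (D.par^[k] v1) := by
            intro k hk h
            exact hnT1 (h ▸ htreep k hk)
          have hIset : ∀ x, x ∈ D.S → ∀ a b : E, a ≠ b → inc ends a x → inc ends b x →
              ∀ e, inc ends e x → e = a ∨ e = b := by
            intro x hx a b hab ha hb e he
            have hsub : ({a, b} : Set E) ⊆ {e | inc ends e x} := by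
              rintro z (rfl | hz)
              · exact ha
              · rw [Set.mem_singleton_iff] at hz
                rw [hz]
                exact hb
            have hle : Set.ncard {e | inc ends e x} ≤ (({a, b} : Set E)).ncard := by
              rw [hd2 x hx, Set.ncard_pair hab]
            have heq := Set.eq_of_subset_of_ncard_le hsub hle (Set.toFinite _)
            have hmem : e ∈ ({a, b} : Set E) := by rw [heq]; exact he
            rcases hmem with rfl | hmem
            · exact Or.inl rfl
            · exact Or.inr hmem
          have hclosed : ∀ v, MGReach ends r v → ∃ k, k ≤ n ∧ v = D.par^[k] v1 := by
            intro v hv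
            induction hv with
            | refl => exact ⟨n, le_rfl, hit.symm⟩
            | tail hab hbc ih =>
              rename_i b cc
              obtain ⟨k, hk, rfl⟩ := ih
              obtain ⟨e, he⟩ := hbc
              have hebe : eb ends e (D.par^[k] v1) cc := he
              by_cases hkn : k = n
              · rw [hkn, hit] at hebe
                have h1 : inc ends (D.pe (D.par^[n-1] v1)) r := by
                  have h5 := eb_inc₂ (hebp (n-1) (by omega))
                  rwa [show (n-1)+1 = n by omega, hit] at h5
                have h2 : inc ends e1 r := eb_inc₁ heb1
                have hne : D.pe (D.par^[n-1] v1) ≠ e1 :=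
                  fun h => (hne1p (n-1) (by omega)) h.symm
                rcases hIset r hrS _ _ hne h1 h2 e (eb_inc₁ hebe) with rfl | rfl
                · rcases eb_inc_cases' (hebp (n-1) (by omega)) (eb_inc₂ hebe) with h | h
                  · exact ⟨n-1, by omega, h⟩
                  · exact ⟨n, le_rfl, by rw [h, show (n-1)+1 = n by omega]⟩
                · rcases eb_inc_cases' heb1 (eb_inc₂ hebe) with h | h
                  · exact ⟨n, le_rfl, by rw [h, hit]⟩
                  · exact ⟨0, by omega, h⟩
              · have hklt : k < n := lt_of_le_of_ne hk hkn
                by_cases hk0 : k = 0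
                · have h1 : inc ends (D.pe v1) v1 := eb_inc₁ (D.pe_eb hv1S hv1r)
                  have h2 : inc ends e1 v1 := eb_inc₂ heb1
                  have hne : D.pe v1 ≠ e1 := by
                    intro h
                    apply hnT1
                    rw [← h]
                    exact ⟨v1, hv1S, hv1r, rfl⟩
                  rw [hk0] at hebe
                  simp only [Function.iterate_zero, id_eq] at hebe
                  rcases hIset v1 hv1S _ _ hne h1 h2 e (eb_inc₁ hebe) with rfl | rfl
                  · have hebv1 : eb ends (D.pe v1) v1 (D.par^[1] v1) := by
                      have h6 := hebp 0 (by omega)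
                      simpa using h6
                    rcases eb_inc_cases' hebv1 (eb_inc₂ hebe) with h | h
                    · exact ⟨0, by omega, by simpa using h⟩
                    · exact ⟨1, by omega, h⟩
                  · rcases eb_inc_cases' heb1 (eb_inc₂ hebe) with h | h
                    · exact ⟨n, le_rfl, by rw [h, hit]⟩
                    · exact ⟨0, by omega, by simpa using h⟩
                · have h1 : inc ends (D.pe (D.par^[k] v1)) (D.par^[k] v1) :=
                    eb_inc₁ (hebp k hklt)
                  have h2 : inc ends (D.pe (D.par^[k-1] v1)) (D.par^[k] v1) := by
                    have h5 := eb_inc₂ (hebp (k-1) (by omega))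
                    rwa [show (k-1)+1 = k by omega] at h5
                  have hne : D.pe (D.par^[k] v1) ≠ D.pe (D.par^[k-1] v1) := by
                    intro h
                    have h7 := D.pe_inj (hcond k hklt).1 (hcond k hklt).2
                      (hcond (k-1) (by omega)).1 (hcond (k-1) (by omega)).2 h
                    have d1 := hdp k (by omega)
                    have d2 := hdp (k-1) (by omega)
                    rw [h7] at d1
                    omega
                  rcases hIset _ (hcond k hklt).1 _ _ hne h1 h2 e (eb_inc₁ hebe) with rfl | rfl
                  · rcases eb_inc_cases' (hebp k hklt) (eb_inc₂ hebe) with h | h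
                    · exact ⟨k, by omega, h⟩
                    · exact ⟨k+1, by omega, h⟩
                  · rcases eb_inc_cases' (hebp (k-1) (by omega)) (eb_inc₂ hebe) with h | h
                    · exact ⟨k-1, by omega, h⟩
                    · exact ⟨k, by omega, by rwa [show (k-1)+1 = k by omega] at h⟩
          have hKeq : {w | MGReach ends r w} = (fun k => D.par^[k] v1) '' (Set.Iic n) := by
            ext w
            constructor
            · intro hw
              obtain ⟨k, hk, rfl⟩ := hclosed w hw
              exact ⟨k, hk, rfl⟩
            · rintro ⟨k, hk, rfl⟩
              exact (D.hS _).2 (hpmem k hk)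
          have hinj : Set.InjOn (fun k => D.par^[k] v1) (Set.Iic n) := by
            intro a ha b hb hab
            simp only [Set.mem_Iic] at ha hb
            have d1 := hdp a ha
            have d2 := hdp b hb
            simp only at hab
            rw [hab] at d1
            omega
          have hIic : (Set.Iic n).ncard = n + 1 := by
            rw [← Finset.coe_Iic, Set.ncard_coe_finset, Nat.card_Iic]
          have hcard : Set.ncard {w | MGReach ends r w} = n + 1 := by
            rw [hKeq, Set.ncard_image_of_injOn hinj, hIic]
          have hoddK : Odd (Set.ncard {w | MGReach ends r w}) := by
            rw [hcard, Nat.odd_iff]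
            have hmod := Nat.mod_two_of_bodd n
            rw [hnev] at hmod
            simp at hmod
            omega
          exact hodd r ⟨fun w hw => hKT w ((D.hS w).1 hw),
            fun w hw => hd2 w ((D.hS w).1 hw)⟩ hoddK
      · -- B2 : all edges at the root are tree edges; flip a subtree
        push_neg at hnt
        obtain ⟨f₁, hf₁m, f₂, hf₂m, hf12⟩ := exists_two_ne (hdeg r hrT)
        have hf₁ : inc ends f₁ r := hf₁m
        have hf₂ : inc ends f₂ r := hf₂m
        obtain ⟨w₁, hw₁S, hw₁r, hpe₁⟩ := hnt f₁ hf₁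
        obtain ⟨w₂, hw₂S, hw₂r, hpe₂⟩ := hnt f₂ hf₂
        have hpw₁ : D.par w₁ = r := by
          rcases D.pe_endpoint hw₁S hw₁r (hpe₁ ▸ hf₁) with h | h
          · exact absurd h.symm hw₁r
          · exact h.symm
        have hpw₂ : D.par w₂ = r := by
          rcases D.pe_endpoint hw₂S hw₂r (hpe₂ ▸ hf₂) with h | h
          · exact absurd h.symm hw₂r
          · exact h.symm
        have hww : w₁ ≠ w₂ := by
          intro h
          rw [← hpe₁, ← hpe₂, h] at hf12
          exact hf12 rfl
        set Dn : Set V := {x | ∃ m, D.par^[m] x = w₁ ∧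
            ∀ k, k ≤ m → D.par^[k] x ∈ D.S ∧ D.par^[k] x ≠ r} with hDn
        set F : Set E := {e | ∃ x ∈ Dn, inc ends e x} with hF
        set c : E → Bool := fun e => if e ∈ F then !(D.col e) else D.col e with hc
        have hcF : ∀ e, e ∈ F → c e = !(D.col e) := fun e he => by rw [hc]; exact if_pos he
        have hcnF : ∀ e, e ∉ F → c e = D.col e := fun e he => by rw [hc]; exact if_neg he
        have hw₁D : w₁ ∈ Dn := by
          rw [hDn]
          refine ⟨0, rfl, ?_⟩
          intro k hk
          have hk0 : k = 0 := by omega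
          rw [hk0]
          exact ⟨hw₁S, hw₁r⟩
        have hDmem : ∀ x, x ∈ Dn → x ∈ D.S ∧ x ≠ r := by
          intro x hx
          rw [hDn] at hx
          obtain ⟨m, _, hcnd⟩ := hx
          simpa using hcnd 0 (Nat.zero_le m)
        have hrD : r ∉ Dn := fun h => (hDmem r h).2 rfl
        have hconsD : ∀ x, x ∈ D.S → x ≠ r → D.par x ∈ Dn → x ∈ Dn := by
          intro x hxS hxr hpx
          rw [hDn] at hpx ⊢
          obtain ⟨m, hm, hcnd⟩ := hpx
          refine ⟨m + 1, ?_, ?_⟩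
          · rw [Function.iterate_succ_apply]
            exact hm
          · intro k hk
            cases k with
            | zero => exact ⟨hxS, hxr⟩
            | succ k =>
              rw [Function.iterate_succ_apply]
              exact hcnd k (by omega)
        have htailD : ∀ x, x ∈ Dn → x = w₁ ∨ D.par x ∈ Dn := by
          intro x hx
          rw [hDn] at hx
          obtain ⟨m, hm, hcnd⟩ := hx
          cases m with
          | zero => exact Or.inl hm
          | succ m =>
            right
            rw [hDn]
            refine ⟨m, ?_, ?_⟩
            · rw [← Function.iterate_succ_apply]
              exact hm
            · intro k hk
              rw [← Function.iterate_succ_apply]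
              exact hcnd (k+1) (by omega)
        have hchainD : ∀ nn x, (∀ k, k < nn → D.par^[k] x ∈ D.S ∧ D.par^[k] x ≠ r) →
            D.par^[nn] x ∈ Dn → x ∈ Dn := by
          intro nn x hcnd hx
          rw [hDn] at hx ⊢
          obtain ⟨m, hm, hmcnd⟩ := hx
          refine ⟨m + nn, ?_, ?_⟩
          · rw [Function.iterate_add_apply]
            exact hm
          · intro k hk
            by_cases hkn : k < nn
            · exact hcnd k hkn
            · have hkm : k - nn ≤ m := by omega
              have heq : D.par^[k] x = D.par^[k-nn] (D.par^[nn] x) := by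
                rw [← Function.iterate_add_apply, show k - nn + nn = k by omega]
              rw [heq]
              exact hmcnd (k - nn) hkm
        have hiterD : ∀ nn x, x ∈ Dn → (∀ k, k < nn → D.par^[k] x ≠ r) →
            D.par^[nn] x ∈ Dn ∨ D.par^[nn] x = r := by
          intro nn
          induction nn with
          | zero => intro x hx _; exact Or.inl hx
          | succ nn ih =>
            intro x hx hcnd
            rcases ih x hx (fun k hk => hcnd k (by omega)) with h | h
            · rcases htailD _ h with heq | hpar
              · right
                rw [Function.iterate_succ_apply', heq, hpw₁]
              · left
                rw [Function.iterate_succ_apply']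
                exact hpar
            · exact absurd h (hcnd nn (by omega))
        have hedge : ∀ e x v, x ∈ Dn → inc ends e x → inc ends e v → v ≠ x →
            v ∈ Dn ∨ v = r := by
          intro e x v hxD hex hev hvx
          have hxS := (hDmem x hxD).1
          rcases D.hD2 x hxS e hex with hT | hC
          · obtain ⟨w, hwS, hwr, hpew⟩ := hT
            rcases D.pe_endpoint hwS hwr (hpew ▸ hex) with hx1 | hx1 <;>
              rcases D.pe_endpoint hwS hwr (hpew ▸ hev) with hv1 | hv1
            · exact absurd (hv1.trans hx1.symm) hvx
            · rcases htailD x hxD with heq | hpar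
              · right
                rw [hv1, ← hx1, heq, hpw₁]
              · left
                rw [hv1, ← hx1]
                exact hpar
            · left
              refine hconsD v (hv1 ▸ hwS) (hv1 ▸ hwr) ?_
              have hpv : D.par v = x := by rw [hv1, ← hx1]
              rw [hpv]
              exact hxD
            · exact absurd (hv1.trans hx1.symm) hvx
          · obtain ⟨a, b, nn, hebe, hnn, hit', hcond'⟩ := hC
            rcases eb_inc_cases' hebe hex with hxa | hxb
            · have hvb : v = b := by
                rcases eb_inc_cases' hebe hev with h | h
                · exact absurd (h.trans hxa.symm) hvx
                · exact h
              left
              refine hchainD nn v ?_ ?_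
              · intro k hk
                rw [hvb]
                exact hcond' k hk
              · rw [hvb, hit', ← hxa]
                exact hxD
            · have hva : v = a := by
                rcases eb_inc_cases' hebe hev with h | h
                · exact h
                · exact absurd (h.trans hxb.symm) hvx
              have hcnd2 : ∀ k, k < nn → D.par^[k] x ≠ r := by
                intro k hk
                rw [hxb]
                exact (hcond' k hk).2
              have h9 := hiterD nn x hxD hcnd2
              have hpa : D.par^[nn] x = v := by
                rw [hxb, hit', hva]
              rw [← hpa]
              exact h9
        have hw₂D : w₂ ∉ Dn := by
          intro h
          rcases htailD _ h with heq | hpar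
          · exact hww heq.symm
          · rw [hpw₂] at hpar
            exact hrD hpar
        have hf₂F : f₂ ∉ F := by
          intro h
          rw [hF] at h
          obtain ⟨x, hxD, hex⟩ := h
          rcases D.pe_endpoint hw₂S hw₂r (hpe₂ ▸ hex) with h1 | h1
          · exact hw₂D (h1 ▸ hxD)
          · rw [hpw₂] at h1
            exact hrD (h1 ▸ hxD)
        refine ⟨c, ?_⟩
        intro v hvS
        by_cases hvD : v ∈ Dn
        · refine good_flip ?_ (D.base_good hdeg hvS (hDmem v hvD).2 (hKT v hvS))
          intro e he
          exact hcF e (by rw [hF]; exact ⟨v, hvD, he⟩)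
        · by_cases hvr : v = r
          · subst hvr
            have hf₁F : f₁ ∈ F := by
              rw [hF]
              exact ⟨w₁, hw₁D, hpe₁ ▸ eb_inc₁ (D.pe_eb hw₁S hw₁r)⟩
            have hcf₁ : c f₁ = true := by
              rw [hcF f₁ hf₁F, ← hpe₁, D.col_root_child hw₁S hw₁r hpw₁]
              rfl
            have hcf₂ : c f₂ = false := by
              rw [hcnF f₂ hf₂F, ← hpe₂]
              exact D.col_root_child hw₂S hw₂r hpw₂
            refine good_of_witness (e := f₁) (f := f₂) hf₁ hf₂ ?_
            rw [hcf₁, hcf₂]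
            rfl
          · refine good_congr ?_ (D.base_good hdeg hvS hvr (hKT v hvS))
            intro e he
            apply hcnF
            intro hef
            rw [hF] at hef
            obtain ⟨x, hxD, hex⟩ := hef
            have hvx : v ≠ x := fun h => hvD (h ▸ hxD)
            rcases hedge e x v hxD hex he hvx with h | h
            · exact hvD h
            · exact hvr h
    · push_neg at hbad
      obtain ⟨et, hincet, hcet⟩ := hbad
      have hcet' : D.col et = true := by
        cases h : D.col et
        · exact absurd h hcet
        · rfl
      obtain ⟨w₀, hw₀S, hw₀r, hpw₀⟩ := D.root_child hincet
      refine ⟨D.col, ?_⟩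
      intro v hvS
      by_cases hvr : v = r
      · subst hvr
        refine good_of_witness hincet (hpw₀ ▸ eb_inc₂ (D.pe_eb hw₀S hw₀r)) ?_
        rw [hcet', D.col_root_child hw₀S hw₀r hpw₀]
        rfl
      · exact D.base_good hdeg hvS hvr (hKT v hvS)

lemma forward_count (ends : E → V × V) (hloop : ∀ e, (ends e).1 ≠ (ends e).2)
    (T : Finset V) (c : E → Bool)
    (hc : ∀ v, v ∉ T → Good (ends := ends) c v) (v₀ : V)
    (hT : ∀ w, MGReach ends v₀ w → w ∉ T)
    (h2 : ∀ w, MGReach ends v₀ w → Set.ncard {e | inc ends e w} = 2) :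
    ¬ Odd (Set.ncard {w | MGReach ends v₀ w}) := by
  classical
  set KF : Finset V := Finset.univ.filter (fun w => MGReach ends v₀ w) with hKF
  have hKmem : ∀ w, w ∈ KF ↔ MGReach ends v₀ w := by
    intro w
    rw [hKF]
    simp
  have hKcard : Set.ncard {w | MGReach ends v₀ w} = KF.card := by
    rw [show {w | MGReach ends v₀ w} = (↑KF : Set V) by ext w; simp [hKmem]]
    exact Set.ncard_coe_finset _
  have hone : ∀ w ∈ KF,
      (Finset.univ.filter (fun e => inc ends e w ∧ c e = true)).card = 1 := by
    intro w hw
    have hwreach := (hKmem w).1 hw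
    obtain ⟨⟨a, ha, hca⟩, ⟨b, hb, hcb⟩⟩ := hc w (hT w hwreach)
    have hab : a ≠ b := by
      intro h
      rw [h] at hca
      rw [hca] at hcb
      exact absurd hcb (by simp)
    have hpair : ∀ e, inc ends e w → e = a ∨ e = b := by
      intro e he
      have hsub : ({a, b} : Set E) ⊆ {e | inc ends e w} := by
        rintro z (rfl | hz)
        · exact ha
        · rw [Set.mem_singleton_iff] at hz
          rw [hz]
          exact hb
      have hle : Set.ncard {e | inc ends e w} ≤ (({a, b} : Set E)).ncard := by
        rw [h2 w hwreach, Set.ncard_pair hab]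
      have heq := Set.eq_of_subset_of_ncard_le hsub hle (Set.toFinite _)
      have hmem : e ∈ ({a, b} : Set E) := by rw [heq]; exact he
      rcases hmem with rfl | hm
      · exact Or.inl rfl
      · exact Or.inr hm
    rw [Finset.card_eq_one]
    refine ⟨a, ?_⟩
    ext e
    simp only [Finset.mem_filter, Finset.mem_univ, true_and, Finset.mem_singleton]
    constructor
    · rintro ⟨hei, hce⟩
      rcases hpair e hei with rfl | rfl
      · rfl
      · rw [hce] at hcb
        exact absurd hcb (by simp)
    · rintro rfl
      exact ⟨ha, hca⟩
  have hsum1 : ∑ w ∈ KF,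
      (Finset.univ.filter (fun e => inc ends e w ∧ c e = true)).card = KF.card := by
    rw [Finset.sum_congr rfl hone]
    simp
  have hclose : ∀ (e : E) (w : V), MGReach ends v₀ w → inc ends e w →
      MGReach ends v₀ (ends e).1 ∧ MGReach ends v₀ (ends e).2 := by
    intro e w hw hi
    have heb : eb ends e (ends e).1 (ends e).2 := Or.inl rfl
    rcases hi with h | h
    · constructor
      · rw [h]; exact hw
      · refine reach_trans ?_ (reach_adj heb)
        rw [h]; exact hw
    · constructor
      · refine reach_trans ?_ (reach_symm (reach_adj heb))
        rw [h]; exact hw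
      · rw [h]; exact hw
  have hsum2 : ∑ w ∈ KF,
      (Finset.univ.filter (fun e => inc ends e w ∧ c e = true)).card
      = 2 * (Finset.univ.filter
          (fun e => c e = true ∧ MGReach ends v₀ (ends e).1)).card := by
    calc ∑ w ∈ KF, (Finset.univ.filter (fun e => inc ends e w ∧ c e = true)).card
        = ∑ w ∈ KF, ∑ e ∈ Finset.univ,
            (if inc ends e w ∧ c e = true then 1 else 0) := by
          refine Finset.sum_congr rfl ?_
          intro w _
          rw [Finset.card_filter]
      _ = ∑ e ∈ Finset.univ, ∑ w ∈ KF,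
            (if inc ends e w ∧ c e = true then 1 else 0) := Finset.sum_comm
      _ = ∑ e ∈ Finset.univ,
            (if c e = true ∧ MGReach ends v₀ (ends e).1 then 2 else 0) := by
          refine Finset.sum_congr rfl ?_
          intro e _
          by_cases hce : c e = true
          · by_cases hre : MGReach ends v₀ (ends e).1
            · rw [if_pos ⟨hce, hre⟩]
              rw [show (∑ w ∈ KF, if inc ends e w ∧ c e = true then 1 else 0)
                  = (KF.filter (fun w => inc ends e w ∧ c e = true)).card from
                  (Finset.card_filter _ _).symm]
              have hep2 : MGReach ends v₀ (ends e).2 :=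
                (hclose e (ends e).1 hre (Or.inl rfl)).2
              have hps : KF.filter (fun w => inc ends e w ∧ c e = true)
                  = {(ends e).1, (ends e).2} := by
                ext w
                constructor
                · intro hw
                  rw [Finset.mem_filter] at hw
                  rcases hw.2.1 with h | h
                  · exact Finset.mem_insert.2 (Or.inl h.symm)
                  · exact Finset.mem_insert.2 (Or.inr (Finset.mem_singleton.2 h.symm))
                · intro hw
                  rw [Finset.mem_filter]
                  rcases Finset.mem_insert.1 hw with rfl | hw2
                  · exact ⟨(hKmem _).2 hre, Or.inl rfl, hce⟩
                  · rw [Finset.mem_singleton] at hw2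
                    subst hw2
                    exact ⟨(hKmem _).2 hep2, Or.inr rfl, hce⟩
              rw [hps, Finset.card_insert_of_notMem (by simp [hloop e]),
                Finset.card_singleton]
            · rw [if_neg (by tauto)]
              refine Finset.sum_eq_zero ?_
              intro w hw
              rw [if_neg]
              rintro ⟨hi, -⟩
              exact hre (hclose e w ((hKmem w).1 hw) hi).1
          · rw [if_neg (by tauto)]
            refine Finset.sum_eq_zero ?_
            intro w hw
            rw [if_neg (by tauto)]
      _ = 2 * (Finset.univ.filter
            (fun e => c e = true ∧ MGReach ends v₀ (ends e).1)).card := by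
          rw [← Finset.sum_filter, Finset.sum_const, smul_eq_mul, mul_comm]
  rw [hKcard]
  rw [hsum1] at hsum2
  rw [hsum2, Nat.odd_iff]
  omega

end compgood

end MGaux

open MGaux in
/-- A finite loop-free multigraph with tagged vertex set `T` admits an
edge 2-coloring such that every untagged vertex is incident to edges of both colors
iff (i) every untagged vertex has degree at least 2, and (ii) no connected component
avoiding `T` is a simple odd cycle.  A component is a simple odd cycle iff it is
2-regular (every vertex is incident to exactly 2 edges) with an odd number of
vertices. -/
theorem edge_two_coloring_no_untagged_monochromatic {V E : Type}
    [Fintype V] [Fintype E] [DecidableEq V]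
    (ends : E → V × V) (hloop : ∀ e, (ends e).1 ≠ (ends e).2)
    (T : Finset V) :
    (∃ c : E → Bool, ∀ v ∉ T,
      (∃ e, ((ends e).1 = v ∨ (ends e).2 = v) ∧ c e = true) ∧
      (∃ e, ((ends e).1 = v ∨ (ends e).2 = v) ∧ c e = false)) ↔
    ((∀ v ∉ T, 2 ≤ Set.ncard {e : E | (ends e).1 = v ∨ (ends e).2 = v}) ∧
     (∀ v : V,
        ((∀ w, MGReach ends v w → w ∉ T) ∧
         (∀ w, MGReach ends v w →
            Set.ncard {e : E | (ends e).1 = w ∨ (ends e).2 = w} = 2)) →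
        ¬ Odd (Set.ncard {w | MGReach ends v w}))) := by
  classical
  constructor
  · rintro ⟨c, hc⟩
    have hgood : ∀ v, v ∉ T → Good (ends := ends) c v := fun v hv => hc v hv
    constructor
    · intro v hv
      obtain ⟨⟨a, ha, hca⟩, ⟨b, hb, hcb⟩⟩ := hgood v hv
      have hab : a ≠ b := by
        intro h
        rw [h] at hca
        rw [hca] at hcb
        exact absurd hcb (by simp)
      have hsub : ({a, b} : Set E) ⊆ {e : E | (ends e).1 = v ∨ (ends e).2 = v} := by
        rintro z (rfl | hz)
        · exact ha
        · rw [Set.mem_singleton_iff] at hz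
          rw [hz]
          exact hb
      calc 2 = (({a, b} : Set E)).ncard := (Set.ncard_pair hab).symm
        _ ≤ _ := Set.ncard_le_ncard hsub (Set.toFinite _)
    · rintro v ⟨h1, h2⟩
      exact forward_count ends hloop T c hgood v h1 h2
  · rintro ⟨hdeg, hodd⟩
    have hex : ∀ v : V, ∃ c : E → Bool,
        ∀ w, MGReach ends v w → w ∉ T → Good (ends := ends) c w :=
      fun v => comp_good ends hloop T hdeg hodd v
    choose Fc hFc using hex
    let st : Setoid V := ⟨fun a b => MGReach ends a b,
      ⟨fun a => reach_refl a, fun h => reach_symm h, fun h1 h2 => reach_trans h1 h2⟩⟩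
    refine ⟨fun e => Fc (Quotient.mk st ((ends e).1)).out e, ?_⟩
    intro v hvT
    have hvout : MGReach ends ((Quotient.mk st v).out) v := by
      have h := Quotient.out_eq (Quotient.mk st v)
      exact Quotient.exact h
    have hgood := hFc ((Quotient.mk st v).out) v hvout hvT
    have htrans : ∀ e, inc ends e v →
        Fc (Quotient.mk st ((ends e).1)).out e = Fc ((Quotient.mk st v).out) e := by
      intro e he
      have heq : (Quotient.mk st ((ends e).1)) = Quotient.mk st v := by
        apply Quotient.sound
        show MGReach ends (ends e).1 v
        rcases he with h | h
        · rw [h]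
          exact reach_refl v
        · have hh : MGReach ends (ends e).1 (ends e).2 := reach_adj (Or.inl rfl)
          rw [← h]
          exact hh
      rw [heq]
    exact good_congr htrans hgood
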